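/- Fix real p > 1 and b > 0, and set q̃_b := (p−1)/(b^{p−1}+1) + b/(b+1). Then there exist a constant C > 0 and an integer k₀ ≥ 1 (both depending on p and b) such that for all integers k ≥ k₀, | −log γ_{k+1} − q̃_b/k | ≤ C/k². Equivalently, −log γ_{k+1} = q̃_b/k + O(1/k²) as k → ∞. -/

import Mathlib

open Real

/-- `α_{i+1} = ((i+1)^{p−1} − i^{p−1})/((i+1)^{p−1} + b^{p−1} i^{p−1})`. -/
noncomputable def alphaCoef (p b : ℝ) (i : ℕ) : ℝ :=
  (((i : ℝ) + 1) ^ (p - 1) - (i : ℝ) ^ (p - 1)) /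
    (((i : ℝ) + 1) ^ (p - 1) + b ^ (p - 1) * (i : ℝ) ^ (p - 1))

/-- `β_{i+1} = (1 − α_{i+1}) · b/((b+1)(i+1))`. -/
noncomputable def betaCoef (p b : ℝ) (i : ℕ) : ℝ :=
  (1 - alphaCoef p b i) * (b / ((b + 1) * ((i : ℝ) + 1)))

/-- `γ_{i+1} = 1 − α_{i+1} − β_{i+1}`. -/
noncomputable def gammaCoef (p b : ℝ) (i : ℕ) : ℝ :=
  1 - alphaCoef p b i - betaCoef p b i



noncomputable def uu (s x : ℝ) : ℝ := (1 + x) ^ s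
noncomputable def uu' (s x : ℝ) : ℝ := 1 * s * (1 + x) ^ (s - 1)
noncomputable def AA (s c x : ℝ) : ℝ := (uu s x - 1) / (uu s x + c)
noncomputable def AA' (s c x : ℝ) : ℝ :=
  (uu' s x * (uu s x + c) - (uu s x - 1) * uu' s x) / (uu s x + c) ^ 2
noncomputable def hh (x : ℝ) : ℝ := x / (1 + x)
noncomputable def hh' (x : ℝ) : ℝ := (1 * (1 + x) - x * 1) / (1 + x) ^ 2
noncomputable def BB (s c b x : ℝ) : ℝ := (1 - AA s c x) * (b / (b + 1)) * hh x
noncomputable def BB' (s c b x : ℝ) : ℝ :=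
  -AA' s c x * (b / (b + 1)) * hh x + (1 - AA s c x) * (b / (b + 1)) * hh' x
noncomputable def gg (s c b x : ℝ) : ℝ := 1 - AA s c x - BB s c b x
noncomputable def gg' (s c b x : ℝ) : ℝ := -AA' s c x - BB' s c b x
noncomputable def FF (s c b qt x : ℝ) : ℝ := -Real.log (gg s c b x) - qt * x
noncomputable def FF' (s c b qt x : ℝ) : ℝ := -(gg' s c b x / gg s c b x) - qt

variable {s c b qt x : ℝ}

lemma hasDerivAt_uu (hx : 0 < 1 + x) : HasDerivAt (uu s) (uu' s x) x := by
  have h := (HasDerivAt.rpow_const (p := s) ((hasDerivAt_id x).const_add 1)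
    (Or.inl hx.ne'))
  exact h.congr_deriv (by simp [uu'])

lemma uu_pos (hx : 0 < 1 + x) : 0 < uu s x := Real.rpow_pos_of_pos hx _

lemma hasDerivAt_AA (hc : 0 < c) (hx : 0 < 1 + x) :
    HasDerivAt (AA s c) (AA' s c x) x := by
  have hu := hasDerivAt_uu (s := s) hx
  have hne : uu s x + c ≠ 0 := by have := uu_pos (s := s) hx; positivity
  exact (hu.sub_const 1).div (hu.add_const c) hne

lemma hasDerivAt_hh (hx : 0 < 1 + x) : HasDerivAt hh (hh' x) x := by
  exact (hasDerivAt_id x).div ((hasDerivAt_id x).const_add 1) hx.ne'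

lemma hasDerivAt_BB (hc : 0 < c) (hx : 0 < 1 + x) :
    HasDerivAt (BB s c b) (BB' s c b x) x := by
  have hA := hasDerivAt_AA (s := s) hc hx
  have hh := hasDerivAt_hh (x := x) hx
  have := ((hA.const_sub 1).mul_const (b / (b + 1))).mul hh
  exact this

lemma hasDerivAt_gg (hc : 0 < c) (hx : 0 < 1 + x) :
    HasDerivAt (gg s c b) (gg' s c b x) x := by
  have := ((hasDerivAt_AA (s := s) hc hx).const_sub 1).sub (hasDerivAt_BB (s := s) (b := b) hc hx)
  exact this

lemma hasDerivAt_FF (hc : 0 < c) (hx : 0 < 1 + x) (hg : gg s c b x ≠ 0) :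
    HasDerivAt (FF s c b qt) (FF' s c b qt x) x := by
  have h1 := ((hasDerivAt_gg (s := s) (c := c) (b := b) hc hx).log hg).neg
  have h2 := (hasDerivAt_id x).const_mul qt
  have := h1.sub h2
  exact this.congr_deriv (by simp [FF'])

lemma uu_zero : uu s 0 = 1 := by simp [uu]
lemma uu'_zero : uu' s 0 = s := by simp [uu']
lemma AA_zero : AA s c 0 = 0 := by simp [AA, uu_zero]
lemma hh_zero : hh 0 = 0 := by simp [hh]
lemma hh'_zero : hh' 0 = 1 := by norm_num [hh']
lemma BB_zero : BB s c b 0 = 0 := by simp [BB, hh_zero]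
lemma gg_zero : gg s c b 0 = 1 := by simp [gg, AA_zero, BB_zero]
lemma AA'_zero (hc : 0 < c) : AA' s c 0 = s / (c + 1) := by
  have h1 : (1 : ℝ) + c ≠ 0 := by positivity
  rw [AA', uu_zero, uu'_zero]
  field_simp
  ring
lemma BB'_zero (hc : 0 < c) (hb : 0 < b) : BB' s c b 0 = b / (b + 1) := by
  rw [BB', AA_zero, hh_zero, hh'_zero]
  ring
lemma FF_zero : FF s c b qt 0 = 0 := by simp [FF, gg_zero]

open Filter Asymptotics in
lemma FF'_isBigO (hc : 0 < c) (hb : 0 < b) (hqt : qt = s / (c + 1) + b / (b + 1)) :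
    (FF' s c b qt) =O[nhds 0] (fun x : ℝ => x) := by
  have h01 : (0:ℝ) < 1 + 0 := by norm_num
  have hune : uu s 0 + c ≠ 0 := by have := uu_pos (s := s) h01; positivity
  have hu0 : DifferentiableAt ℝ (uu s) 0 := (hasDerivAt_uu h01).differentiableAt
  have hu'0 : DifferentiableAt ℝ (uu' s) 0 := by
    have : DifferentiableAt ℝ (fun x : ℝ => 1 + x) 0 := (differentiableAt_fun_id).const_add 1
    exact ((this.rpow_const (Or.inl (by norm_num))).const_mul (1 * s))
  have hA0 : DifferentiableAt ℝ (AA s c) 0 := (hasDerivAt_AA hc h01).differentiableAt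
  have hB0 : DifferentiableAt ℝ (BB s c b) 0 := (hasDerivAt_BB hc h01).differentiableAt
  have hA'0 : DifferentiableAt ℝ (AA' s c) 0 := by
    unfold AA'
    exact ((hu'0.mul (hu0.add_const c)).sub ((hu0.sub_const 1).mul hu'0)).div
      ((hu0.add_const c).pow 2) (by positivity)
  have hhd : DifferentiableAt ℝ hh 0 := (hasDerivAt_hh h01).differentiableAt
  have hh'd : DifferentiableAt ℝ hh' 0 := by
    unfold hh'
    have h1 : DifferentiableAt ℝ (fun x : ℝ => 1 + x) 0 := (differentiableAt_fun_id).const_add 1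
    exact ((differentiableAt_const 1 |>.mul h1).sub (differentiableAt_fun_id.mul
      (differentiableAt_const 1))).div (h1.pow 2) (by norm_num)
  have hB'0 : DifferentiableAt ℝ (BB' s c b) 0 := by
    unfold BB'
    exact ((hA'0.neg.mul_const _).mul hhd).add (((hA0.const_sub 1).mul_const _).mul hh'd)
  -- big-O pieces
  have OA' : (fun x => AA' s c x - AA' s c 0) =O[nhds 0] (fun x : ℝ => x - 0) :=
    hA'0.isBigO_sub
  have OB' : (fun x => BB' s c b x - BB' s c b 0) =O[nhds 0] (fun x : ℝ => x - 0) :=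
    hB'0.isBigO_sub
  have OA : (fun x => AA s c x - AA s c 0) =O[nhds 0] (fun x : ℝ => x - 0) := hA0.isBigO_sub
  have OB : (fun x => BB s c b x - BB s c b 0) =O[nhds 0] (fun x : ℝ => x - 0) := hB0.isBigO_sub
  have hgt : Filter.Tendsto (gg s c b) (nhds 0) (nhds 1) := by
    have := (hasDerivAt_gg (s := s) (c := c) (b := b) hc h01).differentiableAt.continuousAt
    have h := this.tendsto
    rwa [gg_zero] at h
  have hginv : Filter.Tendsto (fun x => (gg s c b x)⁻¹) (nhds 0) (nhds 1) := by
    have := hgt.inv₀ one_ne_zero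
    simpa using this
  have hOg : (fun x => (gg s c b x)⁻¹) =O[nhds 0] (fun _ : ℝ => (1:ℝ)) := hginv.isBigO_one ℝ
  have hgne : ∀ᶠ x : ℝ in nhds 0, gg s c b x ≠ 0 := hgt.eventually_ne one_ne_zero
  have hψ : (fun x => -(gg' s c b x) - qt * gg s c b x) =O[nhds 0] (fun x : ℝ => x - 0) := by
    have hsum := (OA'.add OB').add ((OA.const_mul_left qt).add (OB.const_mul_left qt))
    have heq : (fun x => AA' s c x - AA' s c 0 + (BB' s c b x - BB' s c b 0) +
        (qt * (AA s c x - AA s c 0) + qt * (BB s c b x - BB s c b 0)))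
        = (fun x => -(gg' s c b x) - qt * gg s c b x) := by
      funext x
      rw [AA'_zero hc, BB'_zero hc hb, AA_zero, BB_zero, hqt]
      simp only [gg', gg]
      ring
    rwa [heq] at hsum
  have hFFeq : (FF' s c b qt) =ᶠ[nhds 0]
      (fun x => (-(gg' s c b x) - qt * gg s c b x) * (gg s c b x)⁻¹) := by
    filter_upwards [hgne] with x hx
    rw [FF']
    field_simp
  have hmul := hψ.mul hOg
  have := hFFeq.trans_isBigO hmul
  simpa using this

open Filter Asymptotics in
lemma FF_bound (hc : 0 < c) (hb : 0 < b) (hqt : qt = s / (c + 1) + b / (b + 1)) :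
    ∃ C > (0:ℝ), ∃ ε > (0:ℝ), ∀ x : ℝ, |x| < ε → |FF s c b qt x| ≤ C * x ^ 2 := by
  obtain ⟨C, hCpos, hCw⟩ := (FF'_isBigO hc hb hqt).exists_pos
  have hev := hCw.bound
  rw [Metric.eventually_nhds_iff] at hev
  obtain ⟨ε₁, hε₁, h₁⟩ := hev
  have hgt : Filter.Tendsto (gg s c b) (nhds 0) (nhds 1) := by
    have h01 : (0:ℝ) < 1 + 0 := by norm_num
    have := (hasDerivAt_gg (s := s) (c := c) (b := b) hc h01).differentiableAt.continuousAt
    have h := this.tendsto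
    rwa [gg_zero] at h
  have hgne : ∀ᶠ x : ℝ in nhds 0, gg s c b x ≠ 0 := hgt.eventually_ne one_ne_zero
  rw [Metric.eventually_nhds_iff] at hgne
  obtain ⟨ε₂, hε₂, h₂⟩ := hgne
  refine ⟨C, hCpos, min (min ε₁ ε₂) 1, by positivity, ?_⟩
  intro x hx
  have hx1 : |x| < 1 := lt_of_lt_of_le hx (min_le_right _ _)
  have hxε₁ : |x| < ε₁ := lt_of_lt_of_le hx ((min_le_left _ _).trans (min_le_left _ _))
  have hxε₂ : |x| < ε₂ := lt_of_lt_of_le hx ((min_le_left _ _).trans (min_le_right _ _))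
  set S : Set ℝ := Metric.closedBall (0:ℝ) |x| with hS
  have hmem : ∀ y ∈ S, |y| ≤ |x| := by
    intro y hy
    simpa [Real.dist_eq] using Metric.mem_closedBall.mp hy
  have hder : ∀ y ∈ S, HasDerivWithinAt (FF s c b qt) (FF' s c b qt y) S y := by
    intro y hy
    have hy1 : |y| ≤ |x| := hmem y hy
    have hpos : 0 < 1 + y := by
      have := abs_lt.mp (lt_of_le_of_lt hy1 hx1)
      linarith [this.1]
    have hgney : gg s c b y ≠ 0 := h₂ (by
      rw [Real.dist_eq, sub_zero]
      exact lt_of_le_of_lt hy1 hxε₂)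
    exact (hasDerivAt_FF hc hpos hgney).hasDerivWithinAt
  have hbd : ∀ y ∈ S, ‖FF' s c b qt y‖ ≤ C * |x| := by
    intro y hy
    have hy1 : |y| ≤ |x| := hmem y hy
    have := h₁ (y := y) (by rw [Real.dist_eq, sub_zero]; exact lt_of_le_of_lt hy1 hxε₁)
    calc ‖FF' s c b qt y‖ ≤ C * ‖y‖ := this
      _ ≤ C * |x| := by
          rw [Real.norm_eq_abs]
          exact mul_le_mul_of_nonneg_left hy1 hCpos.le
  have h0S : (0:ℝ) ∈ S := by simp [hS]
  have hxS : x ∈ S := by simp [hS, Real.dist_eq]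
  have := (convex_closedBall (0:ℝ) |x|).norm_image_sub_le_of_norm_hasDerivWithin_le
    hder hbd h0S hxS
  rw [FF_zero, sub_zero, sub_zero, Real.norm_eq_abs, Real.norm_eq_abs] at this
  calc |FF s c b qt x| ≤ C * |x| * |x| := this
    _ = C * x ^ 2 := by rw [mul_assoc, ← abs_mul, ← sq, abs_sq]

lemma gammaCoef_eq (p b : ℝ) (hb : 0 < b) (k : ℕ) (hk : 1 ≤ k) :
    gammaCoef p b k = gg (p - 1) (b ^ (p - 1)) b (1 / (k : ℝ)) := by
  have hK : (0:ℝ) < (k : ℝ) := by exact_mod_cast hk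
  have hKs : (0:ℝ) < (k : ℝ) ^ (p - 1) := Real.rpow_pos_of_pos hK _
  have hfac : ((k : ℝ) + 1) = (k : ℝ) * (1 + 1 / (k : ℝ)) := by field_simp
  have hrp : ((k : ℝ) + 1) ^ (p - 1) = (k : ℝ) ^ (p - 1) * (1 + 1 / (k : ℝ)) ^ (p - 1) := by
    rw [hfac, Real.mul_rpow hK.le (by positivity)]
  have halpha : alphaCoef p b k = AA (p - 1) (b ^ (p - 1)) (1 / (k : ℝ)) := by
    unfold alphaCoef AA uu
    rw [hrp,
      show (k : ℝ) ^ (p-1) * (1 + 1/(k:ℝ)) ^ (p-1) - (k:ℝ) ^ (p-1)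
        = (k:ℝ) ^ (p-1) * ((1 + 1/(k:ℝ)) ^ (p-1) - 1) by ring,
      show (k : ℝ) ^ (p-1) * (1 + 1/(k:ℝ)) ^ (p-1) + b ^ (p-1) * (k:ℝ) ^ (p-1)
        = (k:ℝ) ^ (p-1) * ((1 + 1/(k:ℝ)) ^ (p-1) + b ^ (p-1)) by ring,
      mul_div_mul_left _ _ hKs.ne']
  have hbeta : betaCoef p b k = BB (p - 1) (b ^ (p - 1)) b (1 / (k : ℝ)) := by
    unfold betaCoef BB hh
    rw [halpha]
    have hfac2 : b / ((b + 1) * ((k:ℝ) + 1)) = b / (b + 1) * (1 / (k:ℝ) / (1 + 1 / (k:ℝ))) := by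
      have hb1 : (b:ℝ) + 1 ≠ 0 := by positivity
      have hK : (0:ℝ) < (k : ℝ) := by exact_mod_cast hk
      have hK1 : (k:ℝ) + 1 ≠ 0 := by positivity
      field_simp
    rw [hfac2]
    ring
  unfold gammaCoef gg
  rw [halpha, hbeta]

/-- **Lemma (Taylor expansion of `−log γ_{k+1}`).** With
`q̃_b = (p−1)/(b^{p−1}+1) + b/(b+1)` there are `C > 0` and an integer `k₀ ≥ 1` such that
`| −log γ_{k+1} − q̃_b/k | ≤ C/k²` for all `k ≥ k₀`. -/
theorem neg_log_gamma_expansion (p b : ℝ) (hp : 1 < p) (hb : 0 < b)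
    (qt : ℝ) (hqt : qt = (p - 1) / (b ^ (p - 1) + 1) + b / (b + 1)) :
    ∃ (C : ℝ) (k₀ : ℕ), 0 < C ∧ 1 ≤ k₀ ∧
      ∀ k : ℕ, k₀ ≤ k →
        |(-Real.log (gammaCoef p b k)) - qt / (k : ℝ)| ≤ C / (k : ℝ) ^ 2 := by
  have hs : (0:ℝ) < p - 1 := by linarith
  have hc : (0:ℝ) < b ^ (p - 1) := Real.rpow_pos_of_pos hb _
  obtain ⟨C, hC, ε, hε, hbd⟩ :=
    FF_bound (s := p - 1) (c := b ^ (p - 1)) (b := b) (qt := qt) hc hb hqt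
  refine ⟨C, ⌈ε⁻¹⌉₊ + 1, hC, by omega, ?_⟩
  intro k hk
  have hk1 : 1 ≤ k := by omega
  have hK : (0:ℝ) < (k : ℝ) := by exact_mod_cast hk1
  have h2 : ε⁻¹ < (k : ℝ) := by
    calc ε⁻¹ ≤ (⌈ε⁻¹⌉₊ : ℝ) := Nat.le_ceil _
      _ < ((⌈ε⁻¹⌉₊ + 1 : ℕ) : ℝ) := by exact_mod_cast Nat.lt_succ_self _
      _ ≤ (k : ℝ) := by exact_mod_cast hk
  have hxlt : (1:ℝ) / (k : ℝ) < ε := by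
    rw [div_lt_iff₀ hK]
    have := mul_lt_mul_of_pos_left h2 hε
    rwa [mul_inv_cancel₀ hε.ne'] at this
  have habs : |(1:ℝ) / (k : ℝ)| < ε := by
    rwa [abs_of_pos (by positivity)]
  have hb2 := hbd (1 / (k : ℝ)) habs
  have hgam := gammaCoef_eq p b hb k hk1
  have hFF : FF (p - 1) (b ^ (p - 1)) b qt (1 / (k : ℝ))
      = -Real.log (gammaCoef p b k) - qt / (k : ℝ) := by
    rw [FF, ← hgam, mul_one_div]
  rw [hFF] at hb2
  rwa [div_pow, one_pow, mul_one_div] at hb2
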